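/- Let a:[½,1)→ℝ be continuous with lim_{t→1⁻} a(t) = +∞, and let b:[½,1]→ℝ be continuous with b of one sign (b≥0 everywhere or b≤0 everywhere) on [½,1]. Suppose f₂:[½,1]→ℝ is C² on [½,1), continuous on [½,1], satisfies f₂''(t) = a(t)f₂'(t) + b(t) on [½,1), f₂' extends continuously to 1, and f₂'(½)=0 and f₂'(1)=0. Then b ≡ 0 on [½,1] and f₂ is constant. -/

import Mathlib

open Set Filter MeasureTheory Topology

lemma stmt5aux (a b f₂ f₂' : ℝ → ℝ)
    (ha : ContinuousOn a (Ico (1/2) 1))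
    (haTop : Tendsto a (nhdsWithin 1 (Iio 1)) atTop)
    (hb : ContinuousOn b (Icc (1/2) 1))
    (hbpos : ∀ t ∈ Icc (1/2:ℝ) 1, 0 ≤ b t)
    (hf₂ : ContinuousOn f₂ (Icc (1/2) 1))
    (hd1 : ∀ t ∈ Ico (1/2:ℝ) 1, HasDerivAt f₂ (f₂' t) t)
    (hd2 : ∀ t ∈ Ico (1/2:ℝ) 1, HasDerivAt f₂' (a t * f₂' t + b t) t)
    (hf₂'cont : ContinuousOn f₂' (Icc (1/2) 1))
    (hN1 : f₂' (1/2) = 0) (hN2 : f₂' 1 = 0) :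
    (∀ t ∈ Icc (1/2:ℝ) 1, b t = 0) ∧ (∀ t ∈ Icc (1/2:ℝ) 1, f₂ t = f₂ (1/2)) := by
  set A : ℝ → ℝ := fun t => ∫ s in (1/2:ℝ)..t, a s with hA
  set g : ℝ → ℝ := fun t => Real.exp (-A t) * f₂' t with hg
  have hint : ∀ t ∈ Ico (1/2:ℝ) 1, IntervalIntegrable a volume (1/2) t := by
    intro t ht
    apply ContinuousOn.intervalIntegrable
    rw [uIcc_of_le ht.1]
    exact ha.mono (Icc_subset_Ico_right ht.2)
  have hAderiv : ∀ t ∈ Ioo (1/2:ℝ) 1, HasDerivAt A (a t) t := by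
    intro t ht
    refine intervalIntegral.integral_hasDerivAt_right (hint t ⟨ht.1.le, ht.2⟩) ?_ ?_
    · exact (ha.mono Ioo_subset_Ico_self).stronglyMeasurableAtFilter isOpen_Ioo t ht
    · exact ha.continuousAt (mem_of_superset (Ioo_mem_nhds ht.1 ht.2) Ioo_subset_Ico_self)
  have hgderiv : ∀ t ∈ Ioo (1/2:ℝ) 1, HasDerivAt g (Real.exp (-A t) * b t) t := by
    intro t ht
    have h1 := ((hAderiv t ht).neg).exp
    have h2 := hd2 t (Ioo_subset_Ico_self ht)
    have h3 : HasDerivAt (fun x => Real.exp (-A x) * f₂' x)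
      (Real.exp (-A t) * -a t * f₂' t + Real.exp (-A t) * (a t * f₂' t + b t)) t := h1.mul h2
    convert h3 using 1
    ring
  have hmono : ∀ y ∈ Ico (1/2:ℝ) 1, MonotoneOn g (Icc (1/2) y) := by
    intro y hy
    have hsub : Icc (1/2:ℝ) y ⊆ Icc (1/2) 1 := Icc_subset_Icc_right hy.2.le
    have hAcont : ContinuousOn A (Icc (1/2) y) := by
      have hio : IntegrableOn a (uIcc (1/2:ℝ) y) volume := by
        rw [uIcc_of_le hy.1]
        exact (ha.mono (Icc_subset_Ico_right hy.2)).integrableOn_Icc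
      have h := intervalIntegral.continuousOn_primitive_interval (f := a) (μ := volume) hio
      rwa [uIcc_of_le hy.1] at h
    have hgcont : ContinuousOn g (Icc (1/2) y) :=
      (Real.continuous_exp.comp_continuousOn hAcont.neg).mul (hf₂'cont.mono hsub)
    have hintsub : interior (Icc (1/2:ℝ) y) ⊆ Ioo (1/2:ℝ) 1 := by
      rw [interior_Icc]; exact Ioo_subset_Ioo le_rfl hy.2.le
    refine monotoneOn_of_deriv_nonneg (convex_Icc _ _) hgcont ?_ ?_
    · intro x hx
      exact ((hgderiv x (hintsub hx)).differentiableAt).differentiableWithinAt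
    · intro x hx
      have hx' := hintsub hx
      rw [(hgderiv x hx').deriv]
      exact mul_nonneg (Real.exp_pos _).le (hbpos x ⟨hx'.1.le, hx'.2.le⟩)
  have hghalf : g (1/2) = 0 := by
    show Real.exp (-A (1/2)) * f₂' (1/2) = 0
    rw [hN1, mul_zero]
  have hgnonneg : ∀ t ∈ Ico (1/2:ℝ) 1, 0 ≤ g t := by
    intro t ht
    have := hmono t ht (left_mem_Icc.2 ht.1) (right_mem_Icc.2 ht.1) ht.1
    rwa [hghalf] at this
  obtain ⟨c, hc1, hc⟩ : ∃ c ∈ Iio (1:ℝ), Ioo c 1 ⊆ {s | 1/2 < s ∧ 0 ≤ a s} := by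
    rw [← mem_nhdsLT_iff_exists_Ioo_subset]
    have h1 : ∀ᶠ s in 𝓝[<] (1:ℝ), 0 ≤ a s := haTop.eventually_ge_atTop 0
    have h2 : ∀ᶠ s in 𝓝[<] (1:ℝ), 1/2 < s :=
      (eventually_gt_nhds (by norm_num : (1:ℝ)/2 < 1)).filter_mono nhdsWithin_le_nhds
    exact h2.and h1
  set c₀ : ℝ := (max c (1/2) + 1)/2 with hc₀
  have hm1 : max c (1/2) < 1 := max_lt hc1 (by norm_num)
  have hc₀lt : c₀ < 1 := by rw [hc₀]; linarith
  have hc₀gtc : c < c₀ := by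
    have := le_max_left c (1/2); rw [hc₀]; linarith
  have hc₀ge : 1/2 < c₀ := by
    have := le_max_right c (1/2); rw [hc₀]; linarith
  have hAbound : ∀ t ∈ Ico c₀ (1:ℝ), A c₀ ≤ A t := by
    intro t ht
    have hi1 := hint c₀ ⟨hc₀ge.le, hc₀lt⟩
    have hi2 : IntervalIntegrable a volume c₀ t := by
      apply ContinuousOn.intervalIntegrable
      rw [uIcc_of_le ht.1]
      exact ha.mono (fun u hu => ⟨le_trans hc₀ge.le hu.1, lt_of_le_of_lt hu.2 ht.2⟩)
    have hadd := intervalIntegral.integral_add_adjacent_intervals hi1 hi2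
    have hnn : 0 ≤ ∫ s in c₀..t, a s :=
      intervalIntegral.integral_nonneg ht.1
        (fun u hu => (hc ⟨lt_of_lt_of_le hc₀gtc hu.1, lt_of_le_of_lt hu.2 ht.2⟩).2)
    have e1 : A c₀ = ∫ s in (1/2:ℝ)..c₀, a s := rfl
    have e2 : A t = ∫ s in (1/2:ℝ)..t, a s := rfl
    rw [e1, e2]
    linarith
  have hvlim : Tendsto f₂' (𝓝[<] (1:ℝ)) (𝓝 0) := by
    have h := hf₂'cont 1 (right_mem_Icc.2 (by norm_num))
    rw [← hN2]
    rw [← nhdsWithin_Ioo_eq_nhdsLT (show (1:ℝ)/2 < 1 by norm_num)]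
    exact h.tendsto.mono_left (nhdsWithin_mono _ Ioo_subset_Icc_self)
  have hglim : Tendsto g (𝓝[<] (1:ℝ)) (𝓝 0) := by
    apply squeeze_zero_norm' (a := fun s => Real.exp (-A c₀) * |f₂' s|)
    · filter_upwards [(eventually_gt_nhds hc₀lt).filter_mono nhdsWithin_le_nhds,
        self_mem_nhdsWithin] with s hs1 hs2
      have hAle : A c₀ ≤ A s := hAbound s ⟨hs1.le, hs2⟩
      have : ‖g s‖ = Real.exp (-A s) * |f₂' s| := by
        rw [hg]
        simp [abs_mul, abs_of_pos (Real.exp_pos _)]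
      rw [this]
      exact mul_le_mul_of_nonneg_right (Real.exp_le_exp.2 (neg_le_neg hAle)) (abs_nonneg _)
    · have := (hvlim.abs).const_mul (Real.exp (-A c₀))
      simpa using this
  have hgnonpos : ∀ t ∈ Ico (1/2:ℝ) 1, g t ≤ 0 := by
    intro t ht
    refine ge_of_tendsto hglim ?_
    filter_upwards [(eventually_gt_nhds ht.2).filter_mono nhdsWithin_le_nhds,
      self_mem_nhdsWithin] with s hs1 hs2
    exact hmono s ⟨le_trans ht.1 hs1.le, hs2⟩ ⟨ht.1, hs1.le⟩
      (right_mem_Icc.2 (le_trans ht.1 hs1.le)) hs1.le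
  have hv0 : ∀ t ∈ Ico (1/2:ℝ) 1, f₂' t = 0 := by
    intro t ht
    have h0 : g t = 0 := le_antisymm (hgnonpos t ht) (hgnonneg t ht)
    have h0' : Real.exp (-A t) * f₂' t = 0 := h0
    rcases mul_eq_zero.1 h0' with h | h
    · exact absurd h (Real.exp_ne_zero _)
    · exact h
  have hb0 : ∀ t ∈ Ioo (1/2:ℝ) 1, b t = 0 := by
    intro t ht
    have heq : f₂' =ᶠ[𝓝 t] fun _ => (0:ℝ) := by
      filter_upwards [Ioo_mem_nhds ht.1 ht.2] with s hs
      exact hv0 s (Ioo_subset_Ico_self hs)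
    have h1 : HasDerivAt f₂' 0 t :=
      (hasDerivAt_const t (0:ℝ)).congr_of_eventuallyEq heq
    have h2 := hd2 t (Ioo_subset_Ico_self ht)
    have h3 := h1.unique h2
    rw [hv0 t (Ioo_subset_Ico_self ht)] at h3
    simpa using h3.symm
  have hbhalf : b (1/2) = 0 := by
    have : (𝓝[Ioo (1/2:ℝ) 1] (1/2:ℝ)).NeBot := left_nhdsWithin_Ioo_neBot (by norm_num)
    have hcw : Tendsto b (𝓝[Ioo (1/2:ℝ) 1] (1/2)) (𝓝 (b (1/2))) :=
      (hb (1/2) (left_mem_Icc.2 (by norm_num))).tendsto.mono_left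
        (nhdsWithin_mono _ Ioo_subset_Icc_self)
    have hzero : Tendsto b (𝓝[Ioo (1/2:ℝ) 1] (1/2:ℝ)) (𝓝 0) := by
      refine Tendsto.congr' ?_ tendsto_const_nhds
      filter_upwards [self_mem_nhdsWithin] with s hs
      exact (hb0 s hs).symm
    exact tendsto_nhds_unique hcw hzero
  have hbone : b 1 = 0 := by
    have : (𝓝[Ioo (1/2:ℝ) 1] (1:ℝ)).NeBot := right_nhdsWithin_Ioo_neBot (by norm_num)
    have hcw : Tendsto b (𝓝[Ioo (1/2:ℝ) 1] 1) (𝓝 (b 1)) :=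
      (hb 1 (right_mem_Icc.2 (by norm_num))).tendsto.mono_left
        (nhdsWithin_mono _ Ioo_subset_Icc_self)
    have hzero : Tendsto b (𝓝[Ioo (1/2:ℝ) 1] (1:ℝ)) (𝓝 0) := by
      refine Tendsto.congr' ?_ tendsto_const_nhds
      filter_upwards [self_mem_nhdsWithin] with s hs
      exact (hb0 s hs).symm
    exact tendsto_nhds_unique hcw hzero
  constructor
  · intro t ht
    rcases eq_or_lt_of_le ht.1 with h1 | h1
    · rw [← h1]; exact hbhalf
    rcases eq_or_lt_of_le ht.2 with h2 | h2
    · rw [h2]; exact hbone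
    exact hb0 t ⟨h1, h2⟩
  · apply constant_of_has_deriv_right_zero hf₂
    intro x hx
    have h := (hd1 x hx).hasDerivWithinAt (s := Ici x)
    rwa [hv0 x hx] at h

/-- Maximum-principle type result: if f₂'' = a f₂' + b on [½,1) with a → +∞ at 1,
b continuous of one sign, and f₂'(½) = f₂'(1) = 0, then b ≡ 0 and f₂ is constant. -/
theorem stmt5 (a b f₂ f₂' : ℝ → ℝ)
    (ha : ContinuousOn a (Ico (1/2) 1))
    (haTop : Tendsto a (nhdsWithin 1 (Iio 1)) atTop)
    (hb : ContinuousOn b (Icc (1/2) 1))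
    (hbsign : (∀ t ∈ Icc (1/2:ℝ) 1, 0 ≤ b t) ∨ (∀ t ∈ Icc (1/2:ℝ) 1, b t ≤ 0))
    (hf₂ : ContinuousOn f₂ (Icc (1/2) 1))
    (hd1 : ∀ t ∈ Ico (1/2:ℝ) 1, HasDerivAt f₂ (f₂' t) t)
    (hd2 : ∀ t ∈ Ico (1/2:ℝ) 1, HasDerivAt f₂' (a t * f₂' t + b t) t)
    (hf₂'cont : ContinuousOn f₂' (Icc (1/2) 1))
    (hN1 : f₂' (1/2) = 0) (hN2 : f₂' 1 = 0) :
    (∀ t ∈ Icc (1/2:ℝ) 1, b t = 0) ∧ (∀ t ∈ Icc (1/2:ℝ) 1, f₂ t = f₂ (1/2)) := by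
  rcases hbsign with hpos | hneg
  · exact stmt5aux a b f₂ f₂' ha haTop hb hpos hf₂ hd1 hd2 hf₂'cont hN1 hN2
  · have H := stmt5aux a (fun t => -b t) (fun t => -f₂ t) (fun t => -f₂' t) ha haTop hb.neg
      (fun t ht => neg_nonneg.2 (hneg t ht)) hf₂.neg
      (fun t ht => (hd1 t ht).neg)
      (fun t ht => by
        have h : HasDerivAt (fun x => -f₂' x) (-(a t * f₂' t + b t)) t := (hd2 t ht).neg
        convert h using 1
        ring)
      hf₂'cont.neg (show -f₂' (1/2) = 0 by rw [hN1, neg_zero]) (show -f₂' 1 = 0 by rw [hN2, neg_zero])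
    refine ⟨fun t ht => ?_, fun t ht => ?_⟩
    · have := H.1 t ht
      simpa using this
    · have := H.2 t ht
      simpa using this
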